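/- arXiv:2108.13184 — 3 statements merged into one kernel-verified Lean document; each statement's English description precedes it below -/
import Mathlib

section
/- Let Ψ = α·e₀ + β·e₁ be a unit vector in ℂ² and let G = U_{|Ψ⟩} ∘ U_{|0⟩} be the Grover iterate with phases φ₁, φ₂. Then G(Ψ) = (Q − e^{iφ₁})·α·e₀ + (Q − 1)·β·e₁, where Q = (1 − e^{iφ₂})(e^{iφ₁}|α|² + |β|²) = (1 − e^{iφ₂})(1 − (1 − e^{iφ₁})|α|²). -/
open scoped InnerProductSpace

theorem stmt_3 (φ₁ φ₂ : ℝ) (α β : ℂ)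
    (hnorm : ‖α‖ ^ 2 + ‖β‖ ^ 2 = 1)
    (e0 e1 : EuclideanSpace ℂ (Fin 2))
    (he0 : e0 = EuclideanSpace.single 0 1)
    (he1 : e1 = EuclideanSpace.single 1 1)
    (Ψ : EuclideanSpace ℂ (Fin 2)) (hΨ : Ψ = α • e0 + β • e1)
    (U0 UΨ G : EuclideanSpace ℂ (Fin 2) → EuclideanSpace ℂ (Fin 2))
    (hU0 : ∀ x, U0 x = x - (1 - Complex.exp (Complex.I * φ₁)) • (⟪e0, x⟫_ℂ • e0))
    (hUΨ : ∀ x, UΨ x = (1 - Complex.exp (Complex.I * φ₂)) • (⟪Ψ, x⟫_ℂ • Ψ) - x)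
    (hG : ∀ x, G x = UΨ (U0 x))
    (Q : ℂ)
    (hQ : Q = (1 - Complex.exp (Complex.I * φ₂)) *
      (Complex.exp (Complex.I * φ₁) * ((‖α‖ : ℂ) ^ 2) + (‖β‖ : ℂ) ^ 2)) :
    G Ψ = ((Q - Complex.exp (Complex.I * φ₁)) * α) • e0 + ((Q - 1) * β) • e1 ∧
      Q = (1 - Complex.exp (Complex.I * φ₂)) *
        (1 - (1 - Complex.exp (Complex.I * φ₁)) * ((‖α‖ : ℂ) ^ 2)) := by
  have hn : ((‖α‖ : ℂ)) ^ 2 + ((‖β‖ : ℂ)) ^ 2 = 1 := by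
    exact_mod_cast congrArg (Complex.ofReal) hnorm
  have ha : (starRingEnd ℂ) α * α = ((‖α‖ : ℂ)) ^ 2 := by
    rw [mul_comm, Complex.mul_conj]; rw [← Complex.sq_norm]; push_cast; ring
  have hb : (starRingEnd ℂ) β * β = ((‖β‖ : ℂ)) ^ 2 := by
    rw [mul_comm, Complex.mul_conj]; rw [← Complex.sq_norm]; push_cast; ring
  constructor
  · rw [hG, hU0, hUΨ]
    subst he0 he1 hΨ hQ
    ext i
    fin_cases i <;>
      simp [inner_add_right, inner_sub_right, inner_smul_right, inner_smul_left,
        EuclideanSpace.inner_single_left, EuclideanSpace.inner_single_right,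
        EuclideanSpace.single_apply, -inner_self_eq_norm_sq_to_K] <;> rw [← ha, ← hb] <;> ring
  · rw [hQ]; rw [show ((‖β‖ : ℂ)) ^ 2 = 1 - ((‖α‖ : ℂ))^2 by linear_combination hn]
    ring
end

section
/- Let Ψ = α·e₀ + β·e₁ with |α|² + |β|² = 1, and let G be the Grover iterate with phases φ₁, φ₂. Then the squared |0⟩-amplitude of G(Ψ) equals |R|²·|α|², where R = (1 − e^{iφ₁} − e^{iφ₂}) − (1 − e^{iφ₁})(1 − e^{iφ₂})|α|²; equivalently, ⟨e₀, G(Ψ)⟩ = R·α. -/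
open scoped InnerProductSpace

theorem stmt_7 (φ₁ φ₂ : ℝ) (α β : ℂ)
    (hnorm : ‖α‖ ^ 2 + ‖β‖ ^ 2 = 1)
    (e0 e1 : EuclideanSpace ℂ (Fin 2))
    (he0 : e0 = EuclideanSpace.single 0 1)
    (he1 : e1 = EuclideanSpace.single 1 1)
    (Ψ : EuclideanSpace ℂ (Fin 2)) (hΨ : Ψ = α • e0 + β • e1)
    (U0 UΨ G : EuclideanSpace ℂ (Fin 2) → EuclideanSpace ℂ (Fin 2))
    (hU0 : ∀ x, U0 x = x - (1 - Complex.exp (Complex.I * φ₁)) • (⟪e0, x⟫_ℂ • e0))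
    (hUΨ : ∀ x, UΨ x = (1 - Complex.exp (Complex.I * φ₂)) • (⟪Ψ, x⟫_ℂ • Ψ) - x)
    (hG : ∀ x, G x = UΨ (U0 x))
    (R : ℂ)
    (hR : R = (1 - Complex.exp (Complex.I * φ₁) - Complex.exp (Complex.I * φ₂)) -
      (1 - Complex.exp (Complex.I * φ₁)) * (1 - Complex.exp (Complex.I * φ₂)) *
        ((‖α‖ : ℂ) ^ 2)) :
    ⟪e0, G Ψ⟫_ℂ = R * α ∧
      ‖⟪e0, G Ψ⟫_ℂ‖ ^ 2 = ‖R‖ ^ 2 * ‖α‖ ^ 2 := by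
  have h00 : ⟪e0, e0⟫_ℂ = 1 := by
    simp [he0, EuclideanSpace.inner_single_left, EuclideanSpace.single_apply]
  have h01 : ⟪e0, e1⟫_ℂ = 0 := by
    simp [he0, he1, EuclideanSpace.inner_single_left, EuclideanSpace.single_apply]
  have h10 : ⟪e1, e0⟫_ℂ = 0 := by
    simp [he0, he1, EuclideanSpace.inner_single_left, EuclideanSpace.single_apply]
  have h11 : ⟪e1, e1⟫_ℂ = 1 := by
    simp [he1, EuclideanSpace.inner_single_left, EuclideanSpace.single_apply]
  have hα : (starRingEnd ℂ) α * α = (‖α‖ : ℂ) ^ 2 := by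
    rw [mul_comm, Complex.mul_conj, ← Complex.sq_norm]; push_cast; ring
  have hβ : (starRingEnd ℂ) β * β = (‖β‖ : ℂ) ^ 2 := by
    rw [mul_comm, Complex.mul_conj, ← Complex.sq_norm]; push_cast; ring
  have hn : (‖α‖ : ℂ) ^ 2 + (‖β‖ : ℂ) ^ 2 = 1 := by
    exact_mod_cast congrArg (Complex.ofReal) hnorm
  have key : ⟪e0, G Ψ⟫_ℂ = R * α := by
    simp only [hG, hUΨ, hU0, hΨ, inner_sub_right, inner_add_right, inner_smul_right,
      inner_sub_left, inner_add_left, inner_smul_left, h00, h01, h10, h11, hR]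
    ring_nf
    linear_combination α * Complex.exp (Complex.I * (φ₁ : ℂ)) *
        (1 - Complex.exp (Complex.I * (φ₂ : ℂ))) * hα +
      α * (1 - Complex.exp (Complex.I * (φ₂ : ℂ))) * (hβ + hn)
  refine ⟨key, ?_⟩
  rw [key, norm_mul, mul_pow]
end

section
/- For the uniform superposition |+⟩ = (e₀ + e₁)/√2 and one Grover iteration with phases φ₁, φ₂, the resulting state is (P − e^{iφ₁})·(√2/2)·e₀ + (P − 1)·(√2/2)·e₁ where P = (1 − e^{iφ₂})(1 − ½(1 − e^{iφ₁})), and consequently the collapse probability onto e₀ equals ½·|P − e^{iφ₁}|². -/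
open scoped InnerProductSpace

theorem stmt_8 (φ₁ φ₂ : ℝ)
    (e0 e1 : EuclideanSpace ℂ (Fin 2))
    (he0 : e0 = EuclideanSpace.single 0 1)
    (he1 : e1 = EuclideanSpace.single 1 1)
    (plus : EuclideanSpace ℂ (Fin 2))
    (hplus : plus = ((Real.sqrt 2 / 2 : ℝ) : ℂ) • e0 + ((Real.sqrt 2 / 2 : ℝ) : ℂ) • e1)
    (U0 Uplus G : EuclideanSpace ℂ (Fin 2) → EuclideanSpace ℂ (Fin 2))
    (hU0 : ∀ x, U0 x = x - (1 - Complex.exp (Complex.I * φ₁)) • (⟪e0, x⟫_ℂ • e0))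
    (hUplus : ∀ x, Uplus x = (1 - Complex.exp (Complex.I * φ₂)) • (⟪plus, x⟫_ℂ • plus) - x)
    (hG : ∀ x, G x = Uplus (U0 x))
    (P : ℂ)
    (hP : P = (1 - Complex.exp (Complex.I * φ₂)) *
      (1 - (1 / 2) * (1 - Complex.exp (Complex.I * φ₁)))) :
    G plus = ((P - Complex.exp (Complex.I * φ₁)) * ((Real.sqrt 2 / 2 : ℝ) : ℂ)) • e0 +
        ((P - 1) * ((Real.sqrt 2 / 2 : ℝ) : ℂ)) • e1 ∧
      ‖⟪e0, G plus⟫_ℂ‖ ^ 2 =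
        (1 / 2) * ‖P - Complex.exp (Complex.I * φ₁)‖ ^ 2 := by
  have h00 : ⟪e0, e0⟫_ℂ = 1 := by
    simp [he0, EuclideanSpace.inner_single_left, EuclideanSpace.single_apply]
  have h01 : ⟪e0, e1⟫_ℂ = 0 := by
    simp [he0, he1, EuclideanSpace.inner_single_left, EuclideanSpace.single_apply]
  have h10 : ⟪e1, e0⟫_ℂ = 0 := by
    simp [he0, he1, EuclideanSpace.inner_single_left, EuclideanSpace.single_apply]
  have h11 : ⟪e1, e1⟫_ℂ = 1 := by
    simp [he1, EuclideanSpace.inner_single_left, EuclideanSpace.single_apply]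
  set c : ℂ := ((Real.sqrt 2 / 2 : ℝ) : ℂ) with hc
  have hcc : c * c = 1 / 2 := by
    rw [hc, ← Complex.ofReal_mul, div_mul_div_comm, Real.mul_self_sqrt (by norm_num)]
    norm_num
  have he0p : ⟪e0, plus⟫_ℂ = c := by
    rw [hplus, inner_add_right, inner_smul_right, inner_smul_right, h00, h01]
    ring
  have hpe0 : ⟪plus, e0⟫_ℂ = c := by
    rw [← inner_conj_symm, he0p, hc, Complex.conj_ofReal]
  have hpp : ⟪plus, plus⟫_ℂ = 1 := by
    simp only [hplus, inner_add_left, inner_add_right, inner_smul_left, inner_smul_right,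
      h00, h01, h10, h11, hc, Complex.conj_ofReal]
    rw [← hc]
    linear_combination 2 * hcc
  have hU0p : U0 plus = plus - ((1 - Complex.exp (Complex.I * φ₁)) * c) • e0 := by
    rw [hU0, he0p, smul_smul]
  have hip : ⟪plus, U0 plus⟫_ℂ = 1 - (1 / 2) * (1 - Complex.exp (Complex.I * φ₁)) := by
    rw [hU0p, inner_sub_right, inner_smul_right, hpp, hpe0]
    linear_combination (Complex.exp (Complex.I * φ₁) - 1) * hcc
  have key : G plus = ((P - Complex.exp (Complex.I * φ₁)) * c) • e0 + ((P - 1) * c) • e1 := by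
    rw [hG, hUplus, hip, hU0p, hP, hplus]
    module
  refine ⟨key, ?_⟩
  have hinner : ⟪e0, G plus⟫_ℂ = (P - Complex.exp (Complex.I * φ₁)) * c := by
    rw [key, inner_add_right, inner_smul_right, inner_smul_right, h00, h01]
    ring
  have habs : ‖c‖ ^ 2 = 1 / 2 := by
    rw [hc, Complex.norm_real, Real.norm_eq_abs, sq_abs, div_pow, Real.sq_sqrt (by norm_num)]
    norm_num
  rw [hinner, norm_mul, mul_pow, habs]
  ring
end
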